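/- Let i ∈ {0,1} and j ∈ {1,2}. The mapping N_i^j from λ-term-graphs over Σλ^{i,j} to λ-ap-ho-term-graphs over Σλ^i, defined by: deleting all scope-delimiter vertices (label S), restricting the label function and the (unique) correct abstraction-prefix function P to the remaining vertices V' = V(λ) ∪ V(@) ∪ V(0), keeping the root, and declaring w₀ ↣'_k w₁ for w₀, w₁ ∈ V' iff in the original graph w₀ ↣_k · (↣_0 restricted to S-vertices)* w₁ (i.e. w₁ is reached from the k-th successor of w₀ by passing through finitely many S-vertices along their 0-indexed edges), is well defined: its image is always a λ-ap-ho-term-graph over Σλ^i. -/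

import Mathlib

/-! Common framework: term graphs over a signature, homomorphisms, bisimulations,
    access paths, λ-ho-term-graphs, λ-ap-ho-term-graphs, λ-term-graphs with
    scope delimiters, and the translation constructions. -/

inductive Lab3 : Type
  | app | lam | var
  deriving DecidableEq

/-- Arity function of the signature Σλ^i = {@, λ, 0} with ar(@)=2, ar(λ)=1, ar(0)=i. -/
def ar3 (i : ℕ) : Lab3 → ℕ
  | .app => 2
  | .lam => 1
  | .var => i

inductive Lab4 : Type
  | app | lam | var | del
  deriving DecidableEq

/-- Arity function of Σλ^{i,j} = {@, λ, 0, S} with ar(@)=2, ar(λ)=1, ar(0)=i, ar(S)=j. -/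
def ar4 (i j : ℕ) : Lab4 → ℕ
  | .app => 2
  | .lam => 1
  | .var => i
  | .del => j

def lab3to4 : Lab3 → Lab4
  | .app => .app
  | .lam => .lam
  | .var => .var

def lab4to3 : Lab4 → Lab3
  | .app => .app
  | .lam => .lam
  | .var => .var
  | .del => .var

/-- A term graph over a signature: vertex labelling, argument (successor) lists of
    length matching the arity of the label, a root, and every vertex reachable
    from the root. -/
structure TermGraph (L : Type) (ar : L → ℕ) (V : Type) where
  lab : V → L
  args : V → List V
  root : V
  args_len : ∀ v, (args v).length = ar (lab v)
  reach : ∀ v, Relation.ReflTransGen (fun a b => b ∈ args a) root v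

namespace TermGraph

variable {L V : Type} {ar : L → ℕ}

/-- `G.Succ k w w'` : `w'` is the `k`-th successor of `w` (the edge w ↣_k w'). -/
def Succ (G : TermGraph L ar V) (k : ℕ) (w w' : V) : Prop :=
  (G.args w)[k]? = some w'

/-- `G.Edge w w'` : `w'` is some successor of `w` (the relation ↣). -/
def Edge (G : TermGraph L ar V) (w w' : V) : Prop :=
  w' ∈ G.args w

/-- Reachability ↠ along edges. -/
def Reaches (G : TermGraph L ar V) (w w' : V) : Prop :=
  Relation.ReflTransGen G.Edge w w'

end TermGraph

/-- Homomorphism (functional bisimulation) of term graphs. -/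
def IsHom {L V₁ V₂ : Type} {ar : L → ℕ} (h : V₁ → V₂)
    (G₁ : TermGraph L ar V₁) (G₂ : TermGraph L ar V₂) : Prop :=
  (∀ v, G₂.lab (h v) = G₁.lab v) ∧
  (∀ v, G₂.args (h v) = (G₁.args v).map h) ∧
  h G₁.root = G₂.root

/-- Bisimulation between term graphs: a term graph on a set of pairs, rooted at the
    pair of roots, whose two projections are homomorphisms. -/
def Bisim {L V₁ V₂ : Type} {ar : L → ℕ}
    (G₁ : TermGraph L ar V₁) (G₂ : TermGraph L ar V₂) : Prop :=
  ∃ (S : Set (V₁ × V₂)) (R : TermGraph L ar S),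
    (R.root : V₁ × V₂) = (G₁.root, G₂.root) ∧
    IsHom (fun x : S => x.val.1) R G₁ ∧
    IsHom (fun x : S => x.val.2) R G₂

/-- An access path of a vertex `w`: a path from the root to `w` (with edge indices)
    that visits no vertex twice. -/
structure AccessPath {L V : Type} {ar : L → ℕ} (G : TermGraph L ar V) (w : V) where
  n : ℕ
  vs : Fin (n + 1) → V
  ks : Fin n → ℕ
  start : vs 0 = G.root
  finish : vs (Fin.last n) = w
  step : ∀ m : Fin n, G.Succ (ks m) (vs m.castSucc) (vs m.succ)
  inj : Function.Injective vs

/-- The conditions (root), (self), (nest), (closed), (scope)₀ and (for i = 1) (scope)₁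
    on a scope function. -/
def ScopeConds (i : ℕ) {V : Type} (G : TermGraph Lab3 (ar3 i) V)
    (Sc : V → Set V) : Prop :=
  (∀ v, G.lab v = .lam → G.root ∉ Sc v \ {v}) ∧
  (∀ v, G.lab v = .lam → v ∈ Sc v) ∧
  (∀ v₀ v₁, G.lab v₀ = .lam → G.lab v₁ = .lam → v₁ ∈ Sc v₀ \ {v₀} →
      Sc v₁ ⊆ Sc v₀ \ {v₀}) ∧
  (∀ v w wk k, G.lab v = .lam → G.Succ k w wk → wk ∈ Sc v \ {v} → w ∈ Sc v) ∧
  (∀ w, G.lab w = .var → ∃ v, G.lab v = .lam ∧ w ∈ Sc v \ {v}) ∧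
  (i = 1 → ∀ w w₀, G.lab w = .var → G.Succ 0 w w₀ →
      G.lab w₀ = .lam ∧ ∀ v, G.lab v = .lam → (w ∈ Sc v ↔ w₀ ∈ Sc v))

/-- λ-ho-term-graph over Σλ^i: a Σλ^i-term-graph endowed with a scope function. -/
structure LamHoTG (i : ℕ) (V : Type) extends TermGraph Lab3 (ar3 i) V where
  Sc : V → Set V
  conds : ScopeConds i toTermGraph Sc

/-- Correctness of an abstraction-prefix function for a Σλ^i-term-graph:
    (root), (λ), (@), (0)₀, and (for i = 1) (0)₁. -/
def CorrectAP (i : ℕ) {V : Type} (G : TermGraph Lab3 (ar3 i) V)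
    (P : V → List V) : Prop :=
  (P G.root = []) ∧
  (∀ w w₀, G.lab w = .lam → G.Succ 0 w w₀ → P w₀ <+: P w ++ [w]) ∧
  (∀ w wk k, G.lab w = .app → G.Succ k w wk → P wk <+: P w) ∧
  (∀ w, G.lab w = .var → P w ≠ []) ∧
  (i = 1 → ∀ w w₀, G.lab w = .var → G.Succ 0 w w₀ →
      G.lab w₀ = .lam ∧ P w₀ ++ [w₀] = P w)

/-- λ-ap-ho-term-graph over Σλ^i: a Σλ^i-term-graph endowed with a correct
    abstraction-prefix function. -/
structure LamApHoTG (i : ℕ) (V : Type) extends TermGraph Lab3 (ar3 i) V where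
  P : V → List V
  correct : CorrectAP i toTermGraph P

/-- `ScToP G Sc P` : the abstraction-prefix function `P` is the one obtained from the
    scope function `Sc` by the mapping A_i: for each vertex `w`, `P w` lists exactly
    the binders of `w` other than `w` itself, in order of strictly decreasing scopes. -/
def ScToP {i : ℕ} {V : Type} (G : TermGraph Lab3 (ar3 i) V)
    (Sc : V → Set V) (P : V → List V) : Prop :=
  ∀ w, (∀ v, v ∈ P w ↔ (G.lab v = .lam ∧ w ∈ Sc v ∧ v ≠ w)) ∧
    (P w).Chain' (fun a b => Sc b ⊂ Sc a)

/-- The scope function obtained from an abstraction-prefix function by the mapping B_i: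
    Sc(v) = { w | v occurs in P(w) } ∪ {v}. -/
def ScOfP {V : Type} (P : V → List V) : V → Set V :=
  fun v => {w | v ∈ P w} ∪ {v}

/-- Homomorphism of λ-ho-term-graphs (given by their underlying term graphs and
    scope functions). -/
def IsHoHom {i : ℕ} {V₁ V₂ : Type} (h : V₁ → V₂)
    (G₁ : TermGraph Lab3 (ar3 i) V₁) (Sc₁ : V₁ → Set V₁)
    (G₂ : TermGraph Lab3 (ar3 i) V₂) (Sc₂ : V₂ → Set V₂) : Prop :=
  IsHom h G₁ G₂ ∧ ∀ v, G₁.lab v = .lam → h '' Sc₁ v = Sc₂ (h v)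

/-- Homomorphism of λ-ap-ho-term-graphs (given by their underlying term graphs and
    abstraction-prefix functions). -/
def IsApHom {i : ℕ} {V₁ V₂ : Type} (h : V₁ → V₂)
    (G₁ : TermGraph Lab3 (ar3 i) V₁) (P₁ : V₁ → List V₁)
    (G₂ : TermGraph Lab3 (ar3 i) V₂) (P₂ : V₂ → List V₂) : Prop :=
  IsHom h G₁ G₂ ∧ ∀ v, (P₁ v).map h = P₂ (h v)

/-- Correctness of an abstraction-prefix function for a Σλ^{i,j}-term-graph:
    (root), (λ), (@), (0)₀, (0)₁ (for i = 1), (S)₁, and (S)₂ (for j = 2). -/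
def CorrectAP4 (i j : ℕ) {V : Type} (G : TermGraph Lab4 (ar4 i j) V)
    (P : V → List V) : Prop :=
  (P G.root = []) ∧
  (∀ w w₀, G.lab w = .lam → G.Succ 0 w w₀ → P w₀ = P w ++ [w]) ∧
  (∀ w wk k, G.lab w = .app → G.Succ k w wk → P wk = P w) ∧
  (∀ w, G.lab w = .var → P w ≠ []) ∧
  (i = 1 → ∀ w w₀, G.lab w = .var → G.Succ 0 w w₀ →
      G.lab w₀ = .lam ∧ P w₀ ++ [w₀] = P w) ∧
  (∀ w w₀, G.lab w = .del → G.Succ 0 w w₀ → ∃ v, P w₀ ++ [v] = P w) ∧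
  (j = 2 → ∀ w w₁, G.lab w = .del → G.Succ 1 w w₁ →
      G.lab w₁ = .lam ∧ P w₁ ++ [w₁] = P w)

/-- Vertex-set predicate of the construction G_i^j: original vertices (inl) together
    with scope-delimiter vertices (w, k, w', p) inserted along an edge w ↣_k w',
    one for each prefix p with P(w') < p ≤ P(w)·w (for λ-vertices w),
    resp. P(w') < p ≤ P(w) (for @-vertices w). -/
def GVP {i : ℕ} {V : Type} (G : TermGraph Lab3 (ar3 i) V) (P : V → List V) :
    V ⊕ (V × ℕ × V × List V) → Prop
  | .inl _ => True
  | .inr (w, k, w', p) =>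
      G.Succ k w w' ∧ P w' <+: p ∧ P w' ≠ p ∧
      ((G.lab w = .lam ∧ p <+: P w ++ [w]) ∨ (G.lab w = .app ∧ p <+: P w))

/-- Vertex set of the image of G_i^j. -/
def GVert {i : ℕ} {V : Type} (G : TermGraph Lab3 (ar3 i) V) (P : V → List V) : Type :=
  { x : V ⊕ (V × ℕ × V × List V) // GVP G P x }

/-- Labelling of the image of G_i^j: original labels on original vertices,
    `S` on the inserted delimiter vertices. -/
def GLab {i : ℕ} {V : Type} (G : TermGraph Lab3 (ar3 i) V) (P : V → List V)
    (x : GVert G P) : Lab4 :=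
  match x.val with
  | .inl w => lab3to4 (G.lab w)
  | .inr _ => .del

/-- The successor relation of the image of G_i^j (clauses as in the definition of
    the mapping G_i^j; for j = 2 the inserted S-vertices carry a 1-indexed back-link
    to the abstraction vertex whose extended scope they close). -/
def CSucc {i : ℕ} {V : Type} (j : ℕ) (G : TermGraph Lab3 (ar3 i) V) (P : V → List V)
    (k : ℕ) (x y : GVert G P) : Prop :=
  (∃ w wk, x.val = .inl w ∧ y.val = .inl wk ∧ G.Succ k w wk ∧
     (G.lab w = .var ∨ (G.lab w = .lam ∧ P wk = P w ++ [w]) ∨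
      (G.lab w = .app ∧ P wk = P w))) ∨
  (∃ w w₀, x.val = .inl w ∧ G.lab w = .lam ∧ G.Succ 0 w w₀ ∧ P w₀ ≠ P w ++ [w] ∧
     k = 0 ∧ y.val = .inr (w, 0, w₀, P w ++ [w])) ∨
  (∃ w wk, x.val = .inl w ∧ G.lab w = .app ∧ G.Succ k w wk ∧ P wk ≠ P w ∧
     y.val = .inr (w, k, wk, P w)) ∨
  (∃ w k' w' p v, x.val = .inr (w, k', w', p ++ [v]) ∧ k = 0 ∧ P w' ≠ p ∧
     y.val = .inr (w, k', w', p)) ∨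
  (∃ w k' w' v, x.val = .inr (w, k', w', P w' ++ [v]) ∧ k = 0 ∧ y.val = .inl w') ∨
  (j = 2 ∧ ∃ w k' w' p v, x.val = .inr (w, k', w', p ++ [v]) ∧ k = 1 ∧ y.val = .inl v)

/-- `IsGImage i j G P G'` : the Σλ^{i,j}-term-graph `G'` is the image of the
    λ-ap-ho-term-graph given by `G` and `P` under the mapping G_i^j. -/
def IsGImage (i j : ℕ) {V : Type} (G : TermGraph Lab3 (ar3 i) V) (P : V → List V)
    (G' : TermGraph Lab4 (ar4 i j) (GVert G P)) : Prop :=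
  (G'.root).val = .inl G.root ∧
  (∀ x, G'.lab x = GLab G P x) ∧
  (∀ k x y, G'.Succ k x y ↔ CSucc j G P k x y)

/-- One step along the 0-indexed edge of a scope-delimiter vertex. -/
def DelStep {i j : ℕ} {V : Type} (G : TermGraph Lab4 (ar4 i j) V) (a b : V) : Prop :=
  G.lab a = .del ∧ G.Succ 0 a b

/-- The non-delimiter vertices of a Σλ^{i,j}-term-graph. -/
def NVert {i j : ℕ} {V : Type} (G : TermGraph Lab4 (ar4 i j) V) : Type :=
  { v : V // G.lab v ≠ .del }

/-- `IsNImage i j G P G' P'` : the Σλ^i-term-graph `G'` with abstraction-prefix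
    function `P'` is the image of the λ-term-graph `G` (with correct prefix
    function `P`) under the mapping N_i^j: S-vertices are deleted, labels and the
    prefix function are restricted, the root is kept, and w₀ ↣'_k w₁ holds iff
    w₁ is reached from the k-th successor of w₀ by passing through finitely many
    S-vertices along their 0-indexed edges. -/
def IsNImage (i j : ℕ) {V : Type} (G : TermGraph Lab4 (ar4 i j) V) (P : V → List V)
    (G' : TermGraph Lab3 (ar3 i) (NVert G)) (P' : NVert G → List (NVert G)) : Prop :=
  (G'.root).val = G.root ∧
  (∀ x : NVert G, G'.lab x = lab4to3 (G.lab x.val)) ∧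
  (∀ k (a b : NVert G), G'.Succ k a b ↔
      ∃ u, G.Succ k a.val u ∧ Relation.ReflTransGen (DelStep G) u b.val) ∧
  (∀ v : NVert G, (P' v).map Subtype.val = P v.val)

/-- A λ-term-graph over Σλ^{1,2} (given by `G` with correct prefix function `P`) is
    fully back-linked if the last vertex of the abstraction prefix of any vertex `w`
    is reachable from `w`. -/
def FullyBackLinked {V : Type} (G : TermGraph Lab4 (ar4 1 2) V)
    (P : V → List V) : Prop :=
  ∀ w v p, P w = p ++ [v] → G.Reaches w v

/-- Eager-scope: whenever P(w) = p·v there is a path from `w` to `v` which ends with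
    a 0-indexed edge from a variable vertex to `v`, and all of whose intermediate
    vertices have abstraction prefixes extending P(w). -/
def EagerScope {V : Type} (G : TermGraph Lab4 (ar4 1 2) V)
    (P : V → List V) : Prop :=
  ∀ w v p, P w = p ++ [v] →
    ∃ (n : ℕ) (u : Fin (n + 1) → V),
      u 0 = w ∧
      (∀ m : Fin n, G.Edge (u m.castSucc) (u m.succ)) ∧
      G.Succ 0 (u (Fin.last n)) v ∧
      G.lab (u (Fin.last n)) = .var ∧
      ∀ m : Fin (n + 1), m ≠ 0 → P w <+: P (u m)

section NAux

variable {i j : ℕ} {V : Type}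

/-- One deterministic step through a scope-delimiter vertex, as a partial function. -/
def step? (G : TermGraph Lab4 (ar4 i j) V) (w : V) : Option V :=
  if G.lab w = .del then (G.args w)[0]? else none

/-- Iterated skipping of scope-delimiter vertices with explicit fuel. -/
def skipAux (G : TermGraph Lab4 (ar4 i j) V) : ℕ → V → V
  | 0, w => w
  | n+1, w =>
    match step? G w with
    | none => w
    | some u => skipAux G n u

/-- Skip all scope-delimiter vertices from `w`. -/
def skip (G : TermGraph Lab4 (ar4 i j) V) (P : V → List V) (w : V) : V :=
  skipAux G (P w).length w

lemma skipAux_nondel (G : TermGraph Lab4 (ar4 i j) V) {w : V} (h : G.lab w ≠ .del) :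
    ∀ n, skipAux G n w = w := by
  intro n
  cases n with
  | zero => rfl
  | succ n => simp [skipAux, step?, h]

lemma skip_nondel (G : TermGraph Lab4 (ar4 i j) V) (P : V → List V) {w : V}
    (h : G.lab w ≠ .del) : skip G P w = w :=
  skipAux_nondel G h _

lemma skipAux_spec {G : TermGraph Lab4 (ar4 i j) V} {P : V → List V}
    (hj : 1 ≤ j) (hC : CorrectAP4 i j G P) :
    ∀ n w, (P w).length ≤ n →
      G.lab (skipAux G n w) ≠ .del ∧
      Relation.ReflTransGen (DelStep G) w (skipAux G n w) ∧
      P (skipAux G n w) <+: P w := by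
  intro n
  induction n with
  | zero =>
    intro w hw
    have hwnil : P w = [] := List.length_eq_zero_iff.mp (Nat.le_zero.mp hw)
    have hnd : G.lab w ≠ .del := by
      intro hdel
      have hlen : 0 < (G.args w).length := by
        rw [G.args_len w, hdel]; exact hj
      have hsucc : G.Succ 0 w ((G.args w)[0]) := by
        simp [TermGraph.Succ, List.getElem?_eq_getElem hlen]
      obtain ⟨v, hv⟩ := hC.2.2.2.2.2.1 w _ hdel hsucc
      rw [hwnil] at hv
      exact List.cons_ne_nil _ _ (List.append_eq_nil_iff.mp hv).2
    exact ⟨hnd, Relation.ReflTransGen.refl, List.prefix_refl _⟩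
  | succ n ih =>
    intro w hw
    by_cases hdel : G.lab w = .del
    · have hlen : 0 < (G.args w).length := by
        rw [G.args_len w, hdel]; exact hj
      have hsucc : G.Succ 0 w ((G.args w)[0]) := by
        simp [TermGraph.Succ, List.getElem?_eq_getElem hlen]
      set u := (G.args w)[0] with hu
      obtain ⟨v, hv⟩ := hC.2.2.2.2.2.1 w u hdel hsucc
      have hpre : P u <+: P w := ⟨[v], hv⟩
      have hlenu : (P u).length ≤ n := by
        have := congrArg List.length hv
        simp at this
        omega
      have h0 : (G.args w)[0]? = some u := hsucc
      have hstep : skipAux G (n+1) w = skipAux G n u := by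
        simp [skipAux, step?, hdel, h0]
      obtain ⟨h1, h2, h3⟩ := ih u hlenu
      refine ⟨by rwa [hstep], ?_, by rw [hstep]; exact h3.trans hpre⟩
      rw [hstep]
      exact Relation.ReflTransGen.head ⟨hdel, hsucc⟩ h2
    · have heq : skipAux G (n+1) w = w := by simp [skipAux, step?, hdel]
      rw [heq]
      exact ⟨hdel, Relation.ReflTransGen.refl, List.prefix_refl _⟩

lemma skip_spec {G : TermGraph Lab4 (ar4 i j) V} {P : V → List V}
    (hj : 1 ≤ j) (hC : CorrectAP4 i j G P) (w : V) :
    G.lab (skip G P w) ≠ .del ∧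
      Relation.ReflTransGen (DelStep G) w (skip G P w) ∧
      P (skip G P w) <+: P w :=
  skipAux_spec hj hC _ w le_rfl

/-- Determinism: chains of delimiter steps ending at non-delimiter vertices agree. -/
lemma delStep_uniq {G : TermGraph Lab4 (ar4 i j) V} {a b c : V}
    (hab : Relation.ReflTransGen (DelStep G) a b)
    (hac : Relation.ReflTransGen (DelStep G) a c)
    (hb : G.lab b ≠ .del) (hc : G.lab c ≠ .del) : b = c := by
  induction hab using Relation.ReflTransGen.head_induction_on generalizing c with
  | refl =>
    cases hac.cases_head with
    | inl h => exact h
    | inr h => exact absurd h.choose_spec.1.1 hb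
  | head hstep _ ih =>
    cases hac.cases_head with
    | inl h => exact absurd hstep.1 (h ▸ hc)
    | inr h =>
      obtain ⟨d, ⟨_, hd⟩, hdc⟩ := h
      have : _ = d := Option.some_injective _ (hstep.2.symm.trans hd)
      exact ih (this ▸ hdc) hc

lemma map_prefix_cancel {α β : Type*} {f : α → β} (hf : Function.Injective f)
    {l₁ l₂ : List α} (h : l₁.map f <+: l₂.map f) : l₁ <+: l₂ := by
  obtain ⟨t, ht⟩ := h
  have h2 : (l₂.take l₁.length).map f = l₁.map f := by
    rw [List.map_take, ← ht, List.take_left' (by simp)]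
  exact (List.map_injective_iff.mpr hf h2) ▸ List.take_prefix _ _

/-- Skipping, packaged as a map into the non-delimiter vertices. -/
def skipS (G : TermGraph Lab4 (ar4 i j) V) (P : V → List V)
    (hnd : ∀ u, G.lab (skip G P u) ≠ .del) (u : V) : NVert G :=
  ⟨skip G P u, hnd u⟩

/-- The argument lists of the image graph of N_i^j. -/
def NArgs (G : TermGraph Lab4 (ar4 i j) V) (P : V → List V)
    (hnd : ∀ u, G.lab (skip G P u) ≠ .del) (x : NVert G) : List (NVert G) :=
  (G.args x.val).map (skipS G P hnd)

/-- The restricted abstraction-prefix function of the image graph of N_i^j. -/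
def NP (G : TermGraph Lab4 (ar4 i j) V) (P : V → List V)
    (hgood : ∀ w, ∀ v ∈ P w, G.lab v ≠ Lab4.del) (v : NVert G) : List (NVert G) :=
  (P v.val).pmap (fun u h => ⟨u, h⟩) (hgood v.val)

lemma NP_map (G : TermGraph Lab4 (ar4 i j) V) (P : V → List V)
    (hgood : ∀ w, ∀ v ∈ P w, G.lab v ≠ Lab4.del) (v : NVert G) :
    (NP G P hgood v).map Subtype.val = P v.val := by
  unfold NP
  erw [List.map_pmap]
  exact List.pmap_eq_self.mpr (fun _ _ => rfl)

end NAux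

/-- Proposition 5.5: the mapping N_i^j, deleting the scope-delimiter vertices of a
    λ-term-graph over Σλ^{i,j} and restricting its (unique) correct abstraction-prefix
    function, is well-defined: its image is a λ-ap-ho-term-graph over Σλ^i. -/
theorem nmap_well_defined :
    ∀ i ∈ ({0, 1} : Set ℕ), ∀ j ∈ ({1, 2} : Set ℕ),
      ∀ (V : Type) (G : TermGraph Lab4 (ar4 i j) V) (P : V → List V),
        CorrectAP4 i j G P →
        ∃ (G' : TermGraph Lab3 (ar3 i) (NVert G)) (P' : NVert G → List (NVert G)),
          IsNImage i j G P G' P' ∧ CorrectAP i G' P' := by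
  intro i hi j hj V G P hC
  simp only [Set.mem_insert_iff, Set.mem_singleton_iff] at hi hj
  have hj1 : 1 ≤ j := by omega
  -- the root is not a delimiter vertex
  have hroot : G.lab G.root ≠ .del := by
    intro hdel
    have hlen : 0 < (G.args G.root).length := by rw [G.args_len, hdel]; exact hj1
    have hsucc : G.Succ 0 G.root ((G.args G.root)[0]) := by
      simp [TermGraph.Succ, List.getElem?_eq_getElem hlen]
    obtain ⟨v, hv⟩ := hC.2.2.2.2.2.1 _ _ hdel hsucc
    rw [hC.1] at hv
    exact List.cons_ne_nil _ _ (List.append_eq_nil_iff.mp hv).2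
  have hnd : ∀ u, G.lab (skip G P u) ≠ .del := fun u => (skip_spec hj1 hC u).1
  -- the key invariant, proved by induction along reachability
  have key : ∀ w, Relation.ReflTransGen (fun a b => b ∈ G.args a) G.root w →
      (∀ v ∈ P w, G.lab v = Lab4.lam ∧ ∃ h : G.lab v ≠ Lab4.del,
          Relation.ReflTransGen (fun a b => b ∈ NArgs G P hnd a)
            ⟨G.root, hroot⟩ ⟨v, h⟩) ∧
      Relation.ReflTransGen (fun a b => b ∈ NArgs G P hnd a)
        ⟨G.root, hroot⟩ (skipS G P hnd w) := by
    intro w hw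
    induction hw with
    | refl =>
      constructor
      · rw [hC.1]; simp
      · have : skipS G P hnd G.root = ⟨G.root, hroot⟩ :=
          Subtype.ext (skip_nondel G P hroot)
        rw [this]
        exact Relation.ReflTransGen.refl
    | @tail b c hrb hbc ih =>
      obtain ⟨k, hk⟩ := List.mem_iff_getElem?.mp hbc
      have hsucc : G.Succ k b c := hk
      have hklt : k < ar4 i j (G.lab b) := by
        have := (List.getElem?_eq_some_iff.mp hk).1
        rwa [G.args_len] at this
      cases hlb : G.lab b with
      | app =>
        have hbnd : G.lab b ≠ .del := by rw [hlb]; simp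
        have hPc : P c = P b := hC.2.2.1 b c k hlb hsucc
        have hRb : Relation.ReflTransGen (fun a b => b ∈ NArgs G P hnd a)
            ⟨G.root, hroot⟩ ⟨b, hbnd⟩ := by
          have : skipS G P hnd b = ⟨b, hbnd⟩ := Subtype.ext (skip_nondel G P hbnd)
          exact this ▸ ih.2
        refine ⟨fun v hv => ih.1 v (hPc ▸ hv), ?_⟩
        exact hRb.tail (List.mem_map_of_mem hbc)
      | lam =>
        have hbnd : G.lab b ≠ .del := by rw [hlb]; simp
        rw [hlb] at hklt
        simp only [ar4] at hklt
        have hk0 : k = 0 := by omega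
        subst hk0
        have hPc : P c = P b ++ [b] := hC.2.1 b c hlb hsucc
        have hRb : Relation.ReflTransGen (fun a b => b ∈ NArgs G P hnd a)
            ⟨G.root, hroot⟩ ⟨b, hbnd⟩ := by
          have : skipS G P hnd b = ⟨b, hbnd⟩ := Subtype.ext (skip_nondel G P hbnd)
          exact this ▸ ih.2
        constructor
        · intro v hv
          rw [hPc] at hv
          rcases List.mem_append.mp hv with h | h
          · exact ih.1 v h
          · have hvb : v = b := by simpa using h
            subst hvb
            exact ⟨hlb, hbnd, hRb⟩
        · exact hRb.tail (List.mem_map_of_mem hbc)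
      | var =>
        have hbnd : G.lab b ≠ .del := by rw [hlb]; simp
        rw [hlb] at hklt
        simp only [ar4] at hklt
        have hi1 : i = 1 := by
          rcases hi with h | h
          · omega
          · exact h
        have hk0 : k = 0 := by omega
        subst hk0
        obtain ⟨hclam, hPc⟩ := hC.2.2.2.2.1 hi1 b c hlb hsucc
        have hRb : Relation.ReflTransGen (fun a b => b ∈ NArgs G P hnd a)
            ⟨G.root, hroot⟩ ⟨b, hbnd⟩ := by
          have : skipS G P hnd b = ⟨b, hbnd⟩ := Subtype.ext (skip_nondel G P hbnd)
          exact this ▸ ih.2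
        refine ⟨fun v hv => ih.1 v (hPc ▸ List.mem_append_left _ hv), ?_⟩
        exact hRb.tail (List.mem_map_of_mem hbc)
      | del =>
        rw [hlb] at hklt
        simp only [ar4] at hklt
        rcases Nat.lt_or_ge k 1 with hk0 | hk1
        · have hk0 : k = 0 := by omega
          subst hk0
          obtain ⟨v, hv⟩ := hC.2.2.2.2.2.1 b c hlb hsucc
          have hskipeq : skip G P b = skip G P c :=
            delStep_uniq (skip_spec hj1 hC b).2.1
              (Relation.ReflTransGen.head ⟨hlb, hsucc⟩ (skip_spec hj1 hC c).2.1)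
              (hnd b) (hnd c)
          refine ⟨fun u hu => ih.1 u (hv ▸ List.mem_append_left _ hu), ?_⟩
          have : skipS G P hnd b = skipS G P hnd c := Subtype.ext hskipeq
          exact this ▸ ih.2
        · have hj2 : j = 2 := by
            rcases hj with h | h
            · subst h; simp [ar4, hlb] at hklt; omega
            · exact h
          have hk1' : k = 1 := by simp [ar4, hj2] at hklt; omega
          subst hk1'
          obtain ⟨hclam, hPc⟩ := hC.2.2.2.2.2.2 hj2 b c hlb hsucc
          have hcmem : c ∈ P b := hPc ▸ List.mem_append_right _ (by simp)
          obtain ⟨-, hcnd, hcRT⟩ := ih.1 c hcmem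
          refine ⟨fun u hu => ih.1 u (hPc ▸ List.mem_append_left _ hu), ?_⟩
          have : skipS G P hnd c = ⟨c, hcnd⟩ := Subtype.ext (skip_nondel G P hcnd)
          rw [this]
          exact hcRT
  have hgood : ∀ w, ∀ v ∈ P w, G.lab v ≠ Lab4.del := by
    intro w v hv
    have := ((key w (G.reach w)).1 v hv).1
    rw [this]; simp
  -- the image term graph
  refine ⟨{ lab := fun x => lab4to3 (G.lab x.val)
            args := NArgs G P hnd
            root := ⟨G.root, hroot⟩
            args_len := ?_
            reach := ?_ }, NP G P hgood, ?_, ?_⟩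
  · intro x
    have := G.args_len x.val
    simp only [NArgs, List.length_map, this]
    cases h : G.lab x.val with
    | app => simp [ar4, ar3, lab3to4, lab4to3]
    | lam => simp [ar4, ar3, lab3to4, lab4to3]
    | var => simp [ar4, ar3, lab3to4, lab4to3]
    | del => exact absurd h x.2
  · intro x
    have h2 := (key x.val (G.reach x.val)).2
    have : skipS G P hnd x.val = x := Subtype.ext (skip_nondel G P x.2)
    rwa [this] at h2
  -- the characterization of successors in the image
  all_goals
    have hiff : ∀ k (a b : NVert G), (NArgs G P hnd a)[k]? = some b ↔
        ∃ u, G.Succ k a.val u ∧ Relation.ReflTransGen (DelStep G) u b.val := by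
      intro k a b
      rw [NArgs, List.getElem?_map]
      constructor
      · intro h
        obtain ⟨u, hu1, hu2⟩ := Option.map_eq_some_iff.mp h
        refine ⟨u, hu1, ?_⟩
        have : skip G P u = b.val := congrArg Subtype.val hu2
        exact this ▸ (skip_spec hj1 hC u).2.1
      · rintro ⟨u, hu, hchain⟩
        have heq : skip G P u = b.val :=
          delStep_uniq (skip_spec hj1 hC u).2.1 hchain (hnd u) b.2
        rw [show (G.args a.val)[k]? = some u from hu]
        simp only [Option.map_some]
        exact congrArg some (Subtype.ext heq)
  · -- IsNImage
    refine ⟨rfl, fun x => rfl, ?_, fun v => NP_map G P hgood v⟩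
    intro k a b
    exact hiff k a b
  · -- CorrectAP
    have hval : Function.Injective (Subtype.val :
        NVert G → V) := Subtype.val_injective
    refine ⟨?_, ?_, ?_, ?_, ?_⟩
    · -- root
      have : (NP G P hgood ⟨G.root, hroot⟩).map Subtype.val = [] := by
        erw [NP_map, hC.1]
      exact List.map_eq_nil_iff.mp this
    · -- lambda
      intro w w₀ hlw hs
      obtain ⟨u, hu, hchain⟩ := (hiff 0 w w₀).mp hs
      have hlw' : G.lab w.val = Lab4.lam := by
        cases h : G.lab w.val <;> simp [lab4to3, h] at hlw ⊢
      have hPu : P u = P w.val ++ [w.val] := hC.2.1 w.val u hlw' hu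
      have heq : skip G P u = w₀.val :=
        delStep_uniq (skip_spec hj1 hC u).2.1 hchain (hnd u) w₀.2
      have hpre : P w₀.val <+: P w.val ++ [w.val] := by
        rw [← hPu, ← heq]
        exact (skip_spec hj1 hC u).2.2
      apply map_prefix_cancel hval
      erw [NP_map, List.map_append, NP_map, List.map_cons, List.map_nil]
      simpa using hpre
    · -- application
      intro w wk k hlw hs
      obtain ⟨u, hu, hchain⟩ := (hiff k w wk).mp hs
      have hlw' : G.lab w.val = Lab4.app := by
        cases h : G.lab w.val <;> simp [lab4to3, h] at hlw ⊢
      have hPu : P u = P w.val := hC.2.2.1 w.val u k hlw' hu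
      have heq : skip G P u = wk.val :=
        delStep_uniq (skip_spec hj1 hC u).2.1 hchain (hnd u) wk.2
      have hpre : P wk.val <+: P w.val := by
        rw [← hPu, ← heq]
        exact (skip_spec hj1 hC u).2.2
      apply map_prefix_cancel hval
      rw [NP_map, NP_map]
      exact hpre
    · -- variable nonempty prefix
      intro w hlw hnil
      have hlw' : G.lab w.val = Lab4.var := by
        cases h : G.lab w.val <;> simp [lab4to3, h] at hlw ⊢
        exact absurd h w.2
      have : P w.val = [] := by
        rw [← NP_map G P hgood w, hnil]; rfl
      exact hC.2.2.2.1 w.val hlw' this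
    · -- variable back-link (i = 1)
      intro hi1 w w₀ hlw hs
      obtain ⟨u, hu, hchain⟩ := (hiff 0 w w₀).mp hs
      have hlw' : G.lab w.val = Lab4.var := by
        cases h : G.lab w.val <;> simp [lab4to3, h] at hlw ⊢
        exact absurd h w.2
      obtain ⟨hulam, hPu⟩ := hC.2.2.2.2.1 hi1 w.val u hlw' hu
      have hund : G.lab u ≠ Lab4.del := by rw [hulam]; simp
      have heq : skip G P u = w₀.val :=
        delStep_uniq (skip_spec hj1 hC u).2.1 hchain (hnd u) w₀.2
      have huw : u = w₀.val := by rw [← heq, skip_nondel G P hund]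
      constructor
      · show lab4to3 (G.lab w₀.val) = Lab3.lam
        rw [← huw, hulam]; rfl
      · apply List.map_injective_iff.mpr hval
        erw [List.map_append, NP_map, NP_map, List.map_cons, List.map_nil]
        simpa [← huw] using hPu
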